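/- Let G be the group with generators a₁, b₁, a₂, b₂ and, writing r = b₁⁻¹a₂b₂, with defining relators [a₁,b₁][a₂,b₂], a₁r², a₁b₁⁻²ra₂, a₁b₁⁻⁴ra₂r⁻¹a₂, a₁b₁a₁⁻¹a₂b₂a₂⁻¹, a₁b₁a₁⁻¹b₂⁻¹a₂⁻¹r, [r, a₂⁻¹], and [a₁,b₁] (where [x,y] = xyx⁻¹y⁻¹). Then G is a free abelian group of rank 2, isomorphic to ℤ × ℤ, generated by the images of a₂ and b₂. -/

import Mathlib

namespace SmallestGenusTwo

/-- Generators `a₁, b₁, a₂, b₂` of the free group on four letters. -/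
def a₁ : FreeGroup (Fin 4) := FreeGroup.of 0
def b₁ : FreeGroup (Fin 4) := FreeGroup.of 1
def a₂ : FreeGroup (Fin 4) := FreeGroup.of 2
def b₂ : FreeGroup (Fin 4) := FreeGroup.of 3

/-- `r = b₁⁻¹ a₂ b₂`. -/
def r : FreeGroup (Fin 4) := b₁⁻¹ * a₂ * b₂

/-- The relators induced by the vanishing cycles `x₁, x₂, x₃, x₄, e, d, c`
of the smallest genus-2 Lefschetz fibration `(X₁, f₁)`, together with the
surface relator `[a₁,b₁][a₂,b₂]`. -/
def rels : Set (FreeGroup (Fin 4)) :=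
  { (a₁ * b₁ * a₁⁻¹ * b₁⁻¹) * (a₂ * b₂ * a₂⁻¹ * b₂⁻¹),
    a₁ * r ^ 2,
    a₁ * b₁⁻¹ * b₁⁻¹ * r * a₂,
    a₁ * b₁⁻¹ * b₁⁻¹ * b₁⁻¹ * b₁⁻¹ * r * a₂ * r⁻¹ * a₂,
    a₁ * b₁ * a₁⁻¹ * a₂ * b₂ * a₂⁻¹,
    a₁ * b₁ * a₁⁻¹ * b₂⁻¹ * a₂⁻¹ * r,
    r * a₂⁻¹ * r⁻¹ * a₂,
    a₁ * b₁ * a₁⁻¹ * b₁⁻¹ }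

lemma rel_one {w : FreeGroup (Fin 4)} (hw : w ∈ rels) :
    PresentedGroup.mk rels w = 1 :=
  (QuotientGroup.eq_one_iff w).2 (Subgroup.subset_normalClosure hw)

-- abbreviations for the images of the generators
def X : PresentedGroup rels := .of 0
def Y : PresentedGroup rels := .of 1
def Z : PresentedGroup rels := .of 2
def W : PresentedGroup rels := .of 3

lemma h8 : X * Y * X⁻¹ * Y⁻¹ = 1 := by
  have := rel_one (show a₁ * b₁ * a₁⁻¹ * b₁⁻¹ ∈ rels by simp [rels])
  simpa [a₁, b₁, X, Y, PresentedGroup.of] using this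

lemma hcZW : Commute Z W := by
  have h1 := rel_one (show (a₁ * b₁ * a₁⁻¹ * b₁⁻¹) * (a₂ * b₂ * a₂⁻¹ * b₂⁻¹) ∈ rels by
    simp [rels])
  have h1' : X * Y * X⁻¹ * Y⁻¹ * (Z * W * Z⁻¹ * W⁻¹) = 1 := by
    simpa [a₁, b₁, a₂, b₂, X, Y, Z, W, PresentedGroup.of, mul_assoc] using h1
  rw [h8, one_mul] at h1'
  have : Z * W * Z⁻¹ = W := by
    have := mul_eq_one_iff_eq_inv.mp h1'
    simpa using this
  unfold Commute SemiconjBy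
  calc Z * W = (Z * W * Z⁻¹) * Z := by group
    _ = W * Z := by rw [this]

lemma hb1 : Y = W⁻¹ := by
  have h5 := rel_one (show a₁ * b₁ * a₁⁻¹ * a₂ * b₂ * a₂⁻¹ ∈ rels by simp [rels])
  have h5' : X * Y * X⁻¹ * Z * W * Z⁻¹ = 1 := by
    simpa [a₁, b₁, a₂, b₂, X, Y, Z, W, PresentedGroup.of, mul_assoc] using h5
  have hxy : X * Y * X⁻¹ = Y := by
    have := mul_eq_one_iff_eq_inv.mp h8
    calc X * Y * X⁻¹ = (X * Y * X⁻¹ * Y⁻¹) * Y := by group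
      _ = Y := by rw [h8]; group
  have hz : Z * W * Z⁻¹ = W := by
    calc Z * W * Z⁻¹ = W * Z * Z⁻¹ := by rw [hcZW.eq]
      _ = W := by group
  have : Y * W = 1 := by
    calc Y * W = (X * Y * X⁻¹) * (Z * W * Z⁻¹) := by rw [hxy, hz]
      _ = 1 := by simpa [mul_assoc] using h5'
  exact mul_eq_one_iff_eq_inv.mp this

lemma ha1 : X = Z ^ (-2 : ℤ) * W ^ (-4 : ℤ) := by
  have h2 := rel_one (show a₁ * r ^ 2 ∈ rels by simp [rels])
  have h2' : X * (Y⁻¹ * Z * W) ^ 2 = 1 := by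
    simpa [a₁, b₁, a₂, b₂, r, X, Y, Z, W, PresentedGroup.of, mul_assoc] using h2
  rw [hb1, inv_inv] at h2'
  have hr : W * Z * W = Z * W ^ 2 := by
    calc W * Z * W = Z * W * W := by rw [hcZW.symm.eq]
      _ = Z * W ^ 2 := by rw [pow_two, mul_assoc]
  rw [hr] at h2'
  have hcom : Commute Z (W ^ 2) := hcZW.pow_right 2
  have hsq : (Z * W ^ 2) ^ 2 = Z ^ 2 * W ^ 4 := by
    rw [hcom.mul_pow, ← pow_mul]
  rw [hsq] at h2'
  have := mul_eq_one_iff_eq_inv.mp h2'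
  rw [this, mul_inv_rev, ((hcZW.symm.pow_pow 4 2).inv_inv).eq]
  simp [zpow_neg]


/-- The target values of the generators in `Multiplicative (ℤ × ℤ)`. -/
def f : Fin 4 → Multiplicative (ℤ × ℤ) :=
  ![Multiplicative.ofAdd (-2, -4), Multiplicative.ofAdd (0, -1),
    Multiplicative.ofAdd (1, 0), Multiplicative.ofAdd (0, 1)]

lemma hrels : ∀ w ∈ rels, FreeGroup.lift f w = 1 := by
  intro w hw
  simp only [rels, Set.mem_insert_iff, Set.mem_singleton_iff] at hw
  rcases hw with rfl|rfl|rfl|rfl|rfl|rfl|rfl|rfl <;>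
    · simp only [a₁, b₁, a₂, b₂, r, map_mul, map_inv, map_pow, FreeGroup.lift_apply_of, f]
      decide

/-- The forward homomorphism. -/
def φ : PresentedGroup rels →* Multiplicative (ℤ × ℤ) := PresentedGroup.toGroup hrels

/-- The inverse homomorphism. -/
def ψ : Multiplicative (ℤ × ℤ) →* PresentedGroup rels :=
  MonoidHom.mk' (fun p => Z ^ (p.toAdd.1) * W ^ (p.toAdd.2)) (by
    intro p q
    simp only [toAdd_mul, Prod.fst_add, Prod.snd_add, zpow_add]
    rw [(hcZW.zpow_zpow q.toAdd.1 p.toAdd.2).symm.mul_mul_mul_comm])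

lemma psi_apply (p : Multiplicative (ℤ × ℤ)) : ψ p = Z ^ (p.toAdd.1) * W ^ (p.toAdd.2) := rfl

lemma hphi : ∀ j : Fin 4, φ (.of j) = f j := fun _ => PresentedGroup.toGroup.of hrels

lemma hphiX : φ X = Multiplicative.ofAdd ((-2 : ℤ), (-4 : ℤ)) := hphi 0
lemma hphiY : φ Y = Multiplicative.ofAdd ((0 : ℤ), (-1 : ℤ)) := hphi 1
lemma hphiZ : φ Z = Multiplicative.ofAdd ((1 : ℤ), (0 : ℤ)) := hphi 2
lemma hphiW : φ W = Multiplicative.ofAdd ((0 : ℤ), (1 : ℤ)) := hphi 3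

lemma left_comp : ψ.comp φ = MonoidHom.id (PresentedGroup rels) := by
  apply PresentedGroup.ext
  intro i
  fin_cases i
  · show ψ (φ X) = X
    rw [hphiX, psi_apply]
    show Z ^ (-2 : ℤ) * W ^ (-4 : ℤ) = X
    exact ha1.symm
  · show ψ (φ Y) = Y
    rw [hphiY, psi_apply]
    show Z ^ (0 : ℤ) * W ^ (-1 : ℤ) = Y
    rw [hb1]
    simp
  · show ψ (φ Z) = Z
    rw [hphiZ, psi_apply]
    show Z ^ (1 : ℤ) * W ^ (0 : ℤ) = Z
    simp
  · show ψ (φ W) = W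
    rw [hphiW, psi_apply]
    show Z ^ (0 : ℤ) * W ^ (1 : ℤ) = W
    simp

lemma right_comp : φ.comp ψ = MonoidHom.id (Multiplicative (ℤ × ℤ)) := by
  refine MonoidHom.ext fun p => ?_
  simp only [MonoidHom.comp_apply, MonoidHom.id_apply, psi_apply, map_mul, map_zpow,
    hphiZ, hphiW]
  apply Multiplicative.toAdd.injective
  simp only [toAdd_mul, toAdd_zpow, toAdd_ofAdd, Prod.smul_mk, smul_eq_mul]
  rw [Prod.ext_iff]
  constructor <;> simp

/-- The group `G = π₁(X₁)` of the smallest genus-2 Lefschetz fibration is free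
abelian of rank 2, isomorphic to `ℤ × ℤ`, generated by the images of `a₂` and `b₂`. -/
theorem pi1_smallest_fibration :
    Nonempty (PresentedGroup rels ≃* Multiplicative (ℤ × ℤ)) ∧
      Subgroup.closure
        ({PresentedGroup.of 2, PresentedGroup.of 3} : Set (PresentedGroup rels)) = ⊤ := by
  constructor
  · exact ⟨MonoidHom.toMulEquiv φ ψ left_comp right_comp⟩
  · rw [eq_top_iff]
    intro x _
    refine PresentedGroup.generated_by rels _ (fun j => ?_) x
    have hZm : Z ∈ Subgroup.closure ({Z, W} : Set (PresentedGroup rels)) :=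
      Subgroup.subset_closure (by simp)
    have hWm : W ∈ Subgroup.closure ({Z, W} : Set (PresentedGroup rels)) :=
      Subgroup.subset_closure (by simp)
    fin_cases j
    · show X ∈ _
      rw [ha1]
      exact mul_mem (zpow_mem hZm _) (zpow_mem hWm _)
    · show Y ∈ _
      rw [hb1]
      exact inv_mem hWm
    · exact hZm
    · exact hWm

end SmallestGenusTwo
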